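/- arXiv:2012.02387 — 5 statements merged into one kernel-verified Lean document; each statement's English description precedes it below -/
import Mathlib

section
/- Let J : ℝⁿ → ℝ be continuously differentiable with ∇J Lipschitz with constant L > 0, and let 0 < α ≤ 1/(3L). Define g(θ) = (1/2)·(∇J(θ) + ∇J(θ - α·∇J(θ))) and θ' = θ - α·g(θ). Then J(θ') ≤ J(θ). -/
open InnerProductSpace

lemma descent_lemma {n : ℕ} (J : EuclideanSpace ℝ (Fin n) → ℝ)
    (hJ : ContDiff ℝ 1 J) (L : ℝ) (hL : 0 ≤ L)
    (hLip : ∀ x y, ‖gradient J x - gradient J y‖ ≤ L * ‖x - y‖)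
    (x d : EuclideanSpace ℝ (Fin n)) :
    J (x + d) ≤ J x + (inner ℝ (gradient J x) d : ℝ) + L / 2 * ‖d‖ ^ 2 := by
  have hdiff : ∀ p, HasGradientAt J (gradient J p) p :=
    fun p => (hJ.differentiable one_ne_zero p).hasGradientAt
  have key : ∀ t : ℝ, HasDerivAt (fun s : ℝ => J (x + s • d))
      (inner ℝ (gradient J (x + t • d)) d : ℝ) t := by
    intro t
    have h1 : HasDerivAt (fun s : ℝ => x + s • d) d t := by
      simpa using ((hasDerivAt_id t).smul_const d).const_add x
    have h2 := (hdiff (x + t • d)).hasFDerivAt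
    have := h2.comp_hasDerivAt t h1
    simp [InnerProductSpace.toDual_apply_apply] at this ⊢; exact this
  set φ : ℝ → ℝ := fun t => J (x + t • d) - t * (inner ℝ (gradient J x) d : ℝ)
      - t ^ 2 * (L / 2 * ‖d‖ ^ 2) with hφdef
  have hφ : ∀ t : ℝ, HasDerivAt φ
      ((inner ℝ (gradient J (x + t • d)) d : ℝ) - (inner ℝ (gradient J x) d : ℝ)
        - 2 * t * (L / 2 * ‖d‖ ^ 2)) t := by
    intro t
    have h1 := (key t).sub ((hasDerivAt_id t).mul_const (inner ℝ (gradient J x) d : ℝ))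
    have h2 := (hasDerivAt_pow 2 t).mul_const (L / 2 * ‖d‖ ^ 2)
    have := h1.sub h2
    simp [hφdef, mul_comm, mul_assoc, mul_left_comm] at this ⊢; exact this
  have hanti : AntitoneOn φ (Set.Icc (0:ℝ) 1) := by
    apply antitoneOn_of_deriv_nonpos (convex_Icc 0 1)
    · exact Continuous.continuousOn (by
        have : Differentiable ℝ φ := fun t => (hφ t).differentiableAt
        exact this.continuous)
    · intro t ht
      exact (hφ t).differentiableAt.differentiableWithinAt
    · intro t ht
      rw [interior_Icc] at ht
      rw [(hφ t).deriv]
      have hcs : (inner ℝ (gradient J (x + t • d)) d : ℝ) - (inner ℝ (gradient J x) d : ℝ)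
          ≤ L * (t * ‖d‖) * ‖d‖ := by
        have h1 : (inner ℝ (gradient J (x + t • d)) d : ℝ) - (inner ℝ (gradient J x) d : ℝ)
            = (inner ℝ (gradient J (x + t • d) - gradient J x) d : ℝ) := by
          rw [inner_sub_left]
        rw [h1]
        calc (inner ℝ (gradient J (x + t • d) - gradient J x) d : ℝ)
            ≤ ‖gradient J (x + t • d) - gradient J x‖ * ‖d‖ := real_inner_le_norm _ _
          _ ≤ L * ‖x + t • d - x‖ * ‖d‖ :=
              mul_le_mul_of_nonneg_right (hLip (x + t • d) x) (norm_nonneg d)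
          _ = L * (t * ‖d‖) * ‖d‖ := by
              rw [add_sub_cancel_left, norm_smul, Real.norm_eq_abs, abs_of_pos ht.1]
      nlinarith [hcs, sq_nonneg ‖d‖, ht.1.le]
  have h01 := hanti (Set.mem_Icc.mpr ⟨le_refl 0, zero_le_one⟩) (Set.mem_Icc.mpr ⟨zero_le_one, le_refl 1⟩) zero_le_one
  simp only [hφdef, zero_smul, add_zero, one_smul, zero_mul, sub_zero, one_pow, one_mul, zero_pow] at h01
  linarith

set_option maxHeartbeats 1000000 in
theorem grad_avg_step_monotone {n : ℕ} (J : EuclideanSpace ℝ (Fin n) → ℝ)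
    (hJ : ContDiff ℝ 1 J) (L : ℝ) (hL : 0 < L)
    (hLip : ∀ x y, ‖gradient J x - gradient J y‖ ≤ L * ‖x - y‖)
    (α : ℝ) (hα : 0 < α) (hα' : α ≤ 1 / (3 * L))
    (θ : EuclideanSpace ℝ (Fin n)) :
    J (θ - α • ((1 / 2 : ℝ) • (gradient J θ + gradient J (θ - α • gradient J θ)))) ≤ J θ := by
  set u := gradient J θ with hu
  set v := gradient J (θ - α • u) with hv
  set d : EuclideanSpace ℝ (Fin n) := -(α • ((1 / 2 : ℝ) • (u + v))) with hd
  have hstep : θ - α • ((1 / 2 : ℝ) • (u + v)) = θ + d := by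
    rw [hd, sub_eq_add_neg]
  rw [hstep]
  have hdesc := descent_lemma J hJ L hL.le hLip θ d
  -- bound the quadratic model
  set a := ‖u‖ with ha
  set b := ‖v - u‖ with hb
  set c := ‖u + v‖ with hc
  have hbLa : b ≤ L * (α * a) := by
    have := hLip (θ - α • u) θ
    simpa [hb, hv, hu, norm_smul, abs_of_pos hα, sub_sub_cancel_left, mul_assoc] using this
  have hca : c ≤ 2 * a + b := by
    have h1 : ‖v‖ ≤ a + b := by
      calc ‖v‖ = ‖u + (v - u)‖ := by rw [add_sub_cancel]
        _ ≤ ‖u‖ + ‖v - u‖ := norm_add_le _ _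
    calc c ≤ ‖u‖ + ‖v‖ := norm_add_le _ _
      _ ≤ 2 * a + b := by linarith
  have hip : (inner ℝ u v : ℝ) ≥ a ^ 2 - a * b := by
    have h1 : (inner ℝ u v : ℝ) = ‖u‖ ^ 2 + (inner ℝ u (v - u) : ℝ) := by
      rw [inner_sub_right, real_inner_self_eq_norm_sq]; ring
    have h2 : (inner ℝ u (v - u) : ℝ) ≥ -(a * b) := by
      have := abs_real_inner_le_norm u (v - u)
      rw [abs_le] at this
      linarith [this.1]
    rw [h1]; linarith
  have hαL : α * L ≤ 1 / 3 := by
    have h := (le_div_iff₀ (by positivity : (0:ℝ) < 3 * L)).mp hα'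
    nlinarith
  have hinner : (inner ℝ u d : ℝ) = -(α / 2) * (a ^ 2 + (inner ℝ u v : ℝ)) := by
    rw [hd, inner_neg_right, real_inner_smul_right, real_inner_smul_right, inner_add_right,
      real_inner_self_eq_norm_sq]
    ring
  have hnd : ‖d‖ = α / 2 * c := by
    rw [hd, norm_neg, norm_smul, norm_smul, Real.norm_eq_abs, Real.norm_eq_abs,
      abs_of_pos hα, abs_of_pos (by norm_num : (0:ℝ) < 1/2)]
    ring
  have hquad : (inner ℝ u d : ℝ) + L / 2 * ‖d‖ ^ 2 ≤ 0 := by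
    rw [hinner, hnd]
    have ha0 : 0 ≤ a := norm_nonneg _
    have hb0 : 0 ≤ b := norm_nonneg _
    have hc0 : 0 ≤ c := norm_nonneg _
    have hba : b ≤ a / 3 := by nlinarith
    have hc2 : c ^ 2 ≤ 49 / 9 * a ^ 2 := by nlinarith
    have hT1 : α * c ^ 2 ≤ α * (49 / 9 * a ^ 2) := mul_le_mul_of_nonneg_left hc2 hα.le
    have hS : α * L * (α * c ^ 2) ≤ 1 / 3 * (α * c ^ 2) :=
      mul_le_mul_of_nonneg_right hαL (by positivity)
    have hP : α * (a ^ 2 - a * b) ≤ α * (inner ℝ u v : ℝ) :=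
      mul_le_mul_of_nonneg_left (by linarith) hα.le
    have hR : α * (a * b) ≤ α * (a * (a / 3)) :=
      mul_le_mul_of_nonneg_left (mul_le_mul_of_nonneg_left hba ha0) hα.le
    have hR' : α * a ^ 2 - α * (a * b) ≤ α * (inner ℝ u v : ℝ) := by
      rw [mul_sub] at hP; exact hP
    have hR2 : α * (a * b) ≤ (1 / 3) * (α * a ^ 2) := by
      calc α * (a * b) ≤ α * (a * (a / 3)) :=
            mul_le_mul_of_nonneg_left (mul_le_mul_of_nonneg_left hba ha0) hα.le
        _ = (1 / 3) * (α * a ^ 2) := by ring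
    have hT1' : 1 / 3 * (α * c ^ 2) ≤ 1 / 3 * (α * (49 / 9 * a ^ 2)) := by linarith
    have hkey : α * L * (α * c ^ 2) ≤ 49 / 27 * (α * a ^ 2) := by
      calc α * L * (α * c ^ 2) ≤ 1 / 3 * (α * c ^ 2) := hS
        _ ≤ 1 / 3 * (α * (49 / 9 * a ^ 2)) := hT1'
        _ = 49 / 27 * (α * a ^ 2) := by ring
    have heq : -(α / 2) * (a ^ 2 + (inner ℝ u v : ℝ)) + L / 2 * (α / 2 * c) ^ 2
        = -(1 / 2) * (α * a ^ 2) - (1 / 2) * (α * (inner ℝ u v : ℝ))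
          + (1 / 8) * (α * L * (α * c ^ 2)) := by ring
    rw [heq]
    linarith [mul_nonneg hα.le (sq_nonneg a)]
  linarith [hdesc, hquad]
end

section
/- Let J : ℝⁿ → ℝ be C¹ with ∇J Lipschitz with constant L > 0, let 0 < α ≤ 1/(3L), and let (θ_n) be the Grad-Avg iterates θ_{n+1} = θ_n - (α/2)(∇J(θ_n) + ∇J(θ_n - α∇J(θ_n))). Then the sequence (J(θ_n)) is monotone nonincreasing. -/
open InnerProductSpace intervalIntegral

variable {n : ℕ}

local notation "⟪" x ", " y "⟫" => @inner ℝ _ _ x y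

lemma line_deriv {J : EuclideanSpace ℝ (Fin n) → ℝ} (hJ : ContDiff ℝ 1 J)
    (x y : EuclideanSpace ℝ (Fin n)) (t : ℝ) :
    HasDerivAt (fun s : ℝ => J (x + s • (y - x))) ⟪gradient J (x + t • (y - x)), y - x⟫ t := by
  have hc : HasDerivAt (fun s : ℝ => x + s • (y - x)) (y - x) t := by
    simpa using ((hasDerivAt_id t).smul_const (y - x)).const_add x
  have hg := ((hJ.differentiable one_ne_zero) (x + t • (y - x))).hasGradientAt
  have hf := hg.hasFDerivAt
  have := hf.comp_hasDerivAt t hc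
  exact this

lemma descent {J : EuclideanSpace ℝ (Fin n) → ℝ} (hJ : ContDiff ℝ 1 J)
    {L : ℝ} (hL : 0 ≤ L)
    (hLip : ∀ x y, ‖gradient J x - gradient J y‖ ≤ L * ‖x - y‖)
    (x y : EuclideanSpace ℝ (Fin n)) :
    J y ≤ J x + ⟪gradient J x, y - x⟫ + L / 2 * ‖y - x‖ ^ 2 := by
  have hgradcont : Continuous (gradient J) := by
    have : LipschitzWith (Real.toNNReal L) (gradient J) := by
      apply LipschitzWith.of_dist_le_mul
      intro a b
      simpa [dist_eq_norm, Real.coe_toNNReal L hL] using hLip a b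
    exact this.continuous
  set φ' : ℝ → ℝ := fun t => ⟪gradient J (x + t • (y - x)), y - x⟫ with hφ'
  have hcont : Continuous φ' := by
    apply Continuous.inner
    · exact hgradcont.comp (by continuity)
    · exact continuous_const
  have hftc : J y - J x = ∫ t in (0:ℝ)..1, φ' t := by
    have := intervalIntegral.integral_eq_sub_of_hasDerivAt
      (f := fun s : ℝ => J (x + s • (y - x))) (f' := φ')
      (a := 0) (b := 1)
      (fun t _ => line_deriv hJ x y t)
      (hcont.intervalIntegrable 0 1)
    simp at this
    rw [this]
  have hbound : ∀ t ∈ Set.Icc (0:ℝ) 1, φ' t ≤ ⟪gradient J x, y - x⟫ + L * t * ‖y - x‖ ^ 2 := by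
    intro t ht
    have h1 : φ' t - ⟪gradient J x, y - x⟫ = ⟪gradient J (x + t • (y - x)) - gradient J x, y - x⟫ := by
      rw [inner_sub_left]
    have h2 : ⟪gradient J (x + t • (y - x)) - gradient J x, y - x⟫ ≤ L * t * ‖y - x‖ ^ 2 := by
      calc _ ≤ ‖gradient J (x + t • (y - x)) - gradient J x‖ * ‖y - x‖ :=
              real_inner_le_norm _ _
        _ ≤ (L * ‖x + t • (y - x) - x‖) * ‖y - x‖ := by
              gcongr; exact hLip _ _
        _ = L * t * ‖y - x‖ ^ 2 := by
              rw [add_sub_cancel_left, norm_smul, Real.norm_eq_abs, abs_of_nonneg ht.1]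
              ring
    linarith
  have hint : ∫ t in (0:ℝ)..1, φ' t ≤ ∫ t in (0:ℝ)..1, (⟪gradient J x, y - x⟫ + L * t * ‖y - x‖ ^ 2) := by
    apply intervalIntegral.integral_mono_on zero_le_one
      (hcont.intervalIntegrable 0 1)
      ((continuous_const.add ((continuous_const.mul continuous_id).mul continuous_const)).intervalIntegrable 0 1)
      hbound
  have hval : ∫ t in (0:ℝ)..1, (⟪gradient J x, y - x⟫ + L * t * ‖y - x‖ ^ 2)
      = ⟪gradient J x, y - x⟫ + L / 2 * ‖y - x‖ ^ 2 := by
    rw [intervalIntegral.integral_add (intervalIntegrable_const)]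
    · rw [integral_const]
      have : ∫ t in (0:ℝ)..1, L * t * ‖y - x‖ ^ 2
          = (L * ‖y - x‖ ^ 2) * ∫ t in (0:ℝ)..1, t := by
        rw [← intervalIntegral.integral_const_mul]
        congr 1; ext t; ring
      rw [this, integral_id]
      simp
      ring
    · exact ((continuous_const.mul continuous_id).mul continuous_const).intervalIntegrable 0 1
  linarith [hftc, hint.trans_eq hval]
set_option maxHeartbeats 1000000 in
theorem grad_avg_objective_antitone {n : ℕ} (J : EuclideanSpace ℝ (Fin n) → ℝ)
    (hJ : ContDiff ℝ 1 J) (L : ℝ) (hL : 0 < L)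
    (hLip : ∀ x y, ‖gradient J x - gradient J y‖ ≤ L * ‖x - y‖)
    (α : ℝ) (hα : 0 < α) (hα' : α ≤ 1 / (3 * L))
    (θ : ℕ → EuclideanSpace ℝ (Fin n))
    (hrec : ∀ k, θ (k + 1) =
      θ k - (α / 2) • (gradient J (θ k) + gradient J (θ k - α • gradient J (θ k)))) :
    Antitone fun k => J (θ k) := by
  apply antitone_nat_of_succ_le
  intro k
  show J (θ (k+1)) ≤ J (θ k)
  set x := θ k with hx
  set g := gradient J x with hg
  set gb := gradient J (x - α • g) with hgb
  rw [hrec k, ← hx, ← hg, ← hgb]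
  have hdesc := descent hJ hL.le hLip x (x - (α/2) • (g + gb))
  have hsub : x - (α/2) • (g + gb) - x = -((α/2) • (g + gb)) := by abel
  rw [hsub] at hdesc
  set c := α * L with hc
  have hc0 : 0 ≤ c := by positivity
  have hc1 : c ≤ 1/3 := by
    have := (le_div_iff₀ (by positivity : (0:ℝ) < 3 * L)).mp hα'
    nlinarith
  have hE : ‖gb - g‖ ≤ c * ‖g‖ := by
    have := hLip (x - α • g) x
    have h2 : ‖x - α • g - x‖ = α * ‖g‖ := by
      rw [sub_sub_cancel_left, norm_neg, norm_smul, Real.norm_eq_abs, abs_of_pos hα]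
    rw [h2] at this
    calc ‖gb - g‖ ≤ L * (α * ‖g‖) := this
      _ = c * ‖g‖ := by ring
  have hI : ⟪g, gb⟫_ℝ ≥ ‖g‖^2 - c * ‖g‖^2 := by
    have h1 : ⟪g, gb⟫_ℝ = ⟪g, g⟫_ℝ + ⟪g, gb - g⟫_ℝ := by
      rw [← inner_add_right]; congr 1; abel
    have h2 : |⟪g, gb - g⟫_ℝ| ≤ ‖g‖ * ‖gb - g‖ := abs_real_inner_le_norm _ _
    have h3 : ‖g‖ * ‖gb - g‖ ≤ ‖g‖ * (c * ‖g‖) := by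
      apply mul_le_mul_of_nonneg_left hE (norm_nonneg _)
    rw [h1, real_inner_self_eq_norm_sq]
    have := abs_le.mp h2
    nlinarith
  have hN : ‖g + gb‖ ≤ (2 + c) * ‖g‖ := by
    have h1 : g + gb = (g + g) + (gb - g) := by abel
    rw [h1]
    calc ‖(g + g) + (gb - g)‖ ≤ ‖g + g‖ + ‖gb - g‖ := norm_add_le _ _
      _ ≤ (‖g‖ + ‖g‖) + c * ‖g‖ := add_le_add (norm_add_le _ _) hE
      _ = (2 + c) * ‖g‖ := by ring
  have e1 : ⟪g, -((α/2) • (g + gb))⟫_ℝ = -((α/2) * (‖g‖^2 + ⟪g, gb⟫_ℝ)) := by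
    rw [inner_neg_right, real_inner_smul_right, inner_add_right, real_inner_self_eq_norm_sq]
  have e2 : ‖-((α/2) • (g + gb))‖ = (α/2) * ‖g + gb‖ := by
    rw [norm_neg, norm_smul, Real.norm_eq_abs, abs_of_pos (by positivity : (0:ℝ) < α/2)]
  rw [e1, e2] at hdesc
  have hN2 : ‖g + gb‖^2 ≤ ((2 + c) * ‖g‖)^2 := by
    apply pow_le_pow_left₀ (norm_nonneg _) hN
  have hG : (0:ℝ) ≤ ‖g‖^2 := sq_nonneg _
  have hLc : L * α = c := by rw [hc]; ring
  have key : -((α/2) * (‖g‖^2 + ⟪g, gb⟫_ℝ)) + L / 2 * ((α/2) * ‖g + gb‖)^2 ≤ 0 := by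
    have hexp : L / 2 * ((α/2) * ‖g + gb‖)^2 = (α/8) * (L * α) * ‖g + gb‖^2 := by ring
    rw [hexp, hLc]
    nlinarith [mul_le_mul_of_nonneg_left hN2 (by positivity : (0:ℝ) ≤ α/8 * c),
      mul_le_mul_of_nonneg_left hI (by positivity : (0:ℝ) ≤ α/2),
      mul_nonneg (mul_nonneg hα.le hc0) hG, mul_nonneg hα.le hG,
      mul_nonneg (mul_nonneg (mul_nonneg hα.le hc0) hc0) hG,
      mul_nonneg (mul_nonneg (mul_nonneg (mul_nonneg hα.le hc0) hc0) hc0) hG]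
  linarith
end

section
/- Let Q be a symmetric positive definite n×n real matrix with eigenvalues 0 < λᵢ ≤ L = maxᵢ λᵢ, and let 0 < α < 1/L. Then for f(x) = (1/2)xᵀQx, the Grad-Avg iterates x_{t+1} = (I - αQ + (α²/2)Q²)x_t converge to 0 as t → ∞ for any starting point x₀. -/
theorem grad_avg_quadratic_converges_to_zero {n : ℕ} [NeZero n]
    (Q : Matrix (Fin n) (Fin n) ℝ) (hQ : Q.PosDef) (L : ℝ)
    (hLdef : L = Finset.univ.sup' Finset.univ_nonempty fun i => hQ.1.eigenvalues i)
    (α : ℝ) (hα : 0 < α) (hα' : α < 1 / L)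
    (x₀ : EuclideanSpace ℝ (Fin n)) (x : ℕ → EuclideanSpace ℝ (Fin n))
    (hx0 : x 0 = x₀)
    (hrec : ∀ t, x (t + 1) = x t - α • Matrix.toEuclideanLin Q (x t)
      + (α ^ 2 / 2) • Matrix.toEuclideanLin Q (Matrix.toEuclideanLin Q (x t))) :
    Filter.Tendsto x Filter.atTop (nhds 0) := by
  set b := hQ.1.eigenvectorBasis with hbdef
  set μ := hQ.1.eigenvalues with hμdef
  set c : Fin n → ℝ := fun i => 1 - α * μ i + (α * μ i) ^ 2 / 2 with hcdef
  have hμpos : ∀ i, 0 < μ i := fun i => hQ.eigenvalues_pos i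
  have hμL : ∀ i, μ i ≤ L := by
    intro i
    rw [hLdef]
    exact Finset.le_sup' _ (Finset.mem_univ i)
  have hL : 0 < L := lt_of_lt_of_le (hμpos (Classical.arbitrary _)) (hμL _)
  have hc : ∀ i, |c i| < 1 := by
    intro i
    have h1 : 0 < α * μ i := mul_pos hα (hμpos i)
    have h2 : α * μ i < 1 := by
      calc α * μ i ≤ α * L := by nlinarith [hμL i]
        _ < (1 / L) * L := by nlinarith [hμpos i, hμL i]
        _ = 1 := by field_simp
    rw [abs_lt]
    constructor <;> simp only [hcdef] <;> nlinarith
  have hb : ∀ j, Matrix.toEuclideanLin Q (b j) = μ j • b j := by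
    intro j
    ext i
    have := congrFun (hQ.1.mulVec_eigenvectorBasis j) i
    simpa [Matrix.toEuclideanLin_apply] using this
  have key : ∀ t, x t = ∑ i, (c i ^ t * b.repr x₀ i) • b i := by
    intro t
    induction t with
    | zero => simp [hx0, b.sum_repr x₀]
    | succ t ih =>
      rw [hrec t, ih]
      rw [map_sum, map_sum]
      rw [Finset.smul_sum, Finset.smul_sum, ← Finset.sum_sub_distrib, ← Finset.sum_add_distrib]
      refine Finset.sum_congr rfl fun i _ => ?_
      rw [map_smul, hb i, map_smul, map_smul, hb i]
      simp only [smul_smul]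
      rw [← sub_smul, ← add_smul]
      congr 1
      simp only [hcdef]
      ring
  have : x = fun t => ∑ i, (c i ^ t * b.repr x₀ i) • b i := funext key
  rw [this]
  have h0 : (0 : EuclideanSpace ℝ (Fin n)) = ∑ i : Fin n, (0 : EuclideanSpace ℝ (Fin n)) := by simp
  rw [h0]
  refine tendsto_finset_sum _ fun i _ => ?_
  have hpow : Filter.Tendsto (fun t => c i ^ t) Filter.atTop (nhds 0) :=
    tendsto_pow_atTop_nhds_zero_of_abs_lt_one (hc i)
  have := ((hpow.mul_const (b.repr x₀ i)).smul_const (b i))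
  simpa using this
end

section
/- Let J : ℝⁿ → ℝ be continuously differentiable with ∇J Lipschitz with constant L, and α > 0. For the Grad-Avg averaged gradient g(θ) = (1/2)(∇J(θ) + ∇J(θ - α∇J(θ))), we have ⟪∇J(θ), g(θ)⟫ ≥ (1 - αL/2)·‖∇J(θ)‖²; in particular, for α < 2/L the Grad-Avg direction is a descent direction wherever ∇J(θ) ≠ 0. -/
open scoped RealInnerProductSpace

theorem grad_avg_descent_direction {n : ℕ}
    (J : EuclideanSpace ℝ (Fin n) → ℝ) (hJ : ContDiff ℝ 1 J) (L : ℝ) (hL : 0 < L)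
    (hLip : ∀ x y, ‖gradient J x - gradient J y‖ ≤ L * ‖x - y‖)
    (α : ℝ) (hα : 0 < α) (θ : EuclideanSpace ℝ (Fin n)) :
    ⟪gradient J θ, (1 / 2 : ℝ) • (gradient J θ + gradient J (θ - α • gradient J θ))⟫ ≥
        (1 - α * L / 2) * ‖gradient J θ‖ ^ 2 ∧
      (α < 2 / L → gradient J θ ≠ 0 →
        0 < ⟪gradient J θ,
          (1 / 2 : ℝ) • (gradient J θ + gradient J (θ - α • gradient J θ))⟫) := by
  set g := gradient J θ with hg
  set g' := gradient J (θ - α • g) with hg'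
  have hdiff : ‖g' - g‖ ≤ α * L * ‖g‖ := by
    have := hLip (θ - α • g) θ
    simpa [norm_smul, abs_of_pos hα, mul_comm, mul_assoc, mul_left_comm] using this
  have hinner : ⟪g, g' - g⟫ ≥ -(α * L * ‖g‖ ^ 2) := by
    have h1 : |⟪g, g' - g⟫| ≤ ‖g‖ * ‖g' - g‖ := abs_real_inner_le_norm _ _
    have h2 : ‖g‖ * ‖g' - g‖ ≤ ‖g‖ * (α * L * ‖g‖) :=
      mul_le_mul_of_nonneg_left hdiff (norm_nonneg _)
    nlinarith [abs_nonneg ⟪g, g' - g⟫, neg_abs_le ⟪g, g' - g⟫, sq_nonneg ‖g‖]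
  have key : ⟪g, (1 / 2 : ℝ) • (g + g')⟫ = ‖g‖ ^ 2 + (1/2) * ⟪g, g' - g⟫ := by
    rw [real_inner_smul_right, inner_add_right, inner_sub_right,
      real_inner_self_eq_norm_sq]
    ring
  constructor
  · rw [key]
    nlinarith [sq_nonneg ‖g‖]
  · intro hα2 hg0
    have hgpos : 0 < ‖g‖ ^ 2 := pow_pos (norm_pos_iff.mpr hg0) 2
    have : α * L < 2 := by
      have := (lt_div_iff₀ hL).mp hα2
      linarith
    rw [key]
    nlinarith
end

section
/- Let J : ℝⁿ → ℝ be C¹ with ∇J Lipschitz with constant L > 0, let 0 < α ≤ 1/(3L), and suppose J is bounded below. Then for the Grad-Avg iterates (θ_n), ∇J(θ_n) → 0 as n → ∞. -/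
set_option maxHeartbeats 1000000

open InnerProductSpace

lemma grad_avg_line_deriv {F : Type*} [NormedAddCommGroup F] [InnerProductSpace ℝ F]
    [CompleteSpace F]
    (f : F → ℝ) (hf : ContDiff ℝ 1 f) (x v : F) (t : ℝ) :
    HasDerivAt (fun s : ℝ => f (x + s • v)) (inner ℝ (gradient f (x + t • v)) v : ℝ) t := by
  have h2 := ((hf.differentiable one_ne_zero (x + t • v)).hasGradientAt).hasFDerivAt
  have h3 : HasDerivAt (fun s : ℝ => x + s • v) v t := by
    simpa using ((hasDerivAt_id t).smul_const v).const_add x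
  have h4 := h2.comp_hasDerivAt t h3
  simp [Function.comp_def] at h4 ⊢
  exact h4

lemma grad_avg_descent {F : Type*} [NormedAddCommGroup F] [InnerProductSpace ℝ F]
    [CompleteSpace F]
    (f : F → ℝ) (hf : ContDiff ℝ 1 f) (L : ℝ)
    (hLip : ∀ x y, ‖gradient f x - gradient f y‖ ≤ L * ‖x - y‖) (x v : F) :
    f (x + v) ≤ f x + inner ℝ (gradient f x) v + L / 2 * ‖v‖ ^ 2 := by
  set g : ℝ → ℝ := fun t => f (x + t • v) - t * inner ℝ (gradient f x) v - L / 2 * ‖v‖ ^ 2 * t ^ 2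
    with hg
  have hderiv : ∀ t : ℝ, HasDerivAt g
      ((inner ℝ (gradient f (x + t • v)) v : ℝ) - inner ℝ (gradient f x) v - L * ‖v‖ ^ 2 * t) t := by
    intro t
    have h1 := grad_avg_line_deriv f hf x v t
    have h2 : HasDerivAt (fun t : ℝ => t * (inner ℝ (gradient f x) v : ℝ))
        (inner ℝ (gradient f x) v) t := by simpa using (hasDerivAt_id t).mul_const _
    have h3 : HasDerivAt (fun t : ℝ => L / 2 * ‖v‖ ^ 2 * t ^ 2) (L * ‖v‖ ^ 2 * t) t := by
      have := (hasDerivAt_pow 2 t).const_mul (L / 2 * ‖v‖ ^ 2)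
      refine this.congr_deriv ?_
      norm_num; ring
    exact (h1.sub h2).sub h3
  have hmono : g 1 ≤ g 0 := by
    have hcont : ContinuousOn g (Set.Icc 0 1) :=
      fun t _ => (hderiv t).continuousAt.continuousWithinAt
    have := antitoneOn_of_deriv_nonpos (convex_Icc (0:ℝ) 1) hcont
      (fun t ht => (hderiv t).differentiableAt.differentiableWithinAt) ?_
      (by norm_num : (0:ℝ) ∈ Set.Icc (0:ℝ) 1) (by norm_num : (1:ℝ) ∈ Set.Icc (0:ℝ) 1)
      zero_le_one
    · exact this
    · intro t ht
      rw [interior_Icc] at ht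
      rw [(hderiv t).deriv]
      have hb : (inner ℝ (gradient f (x + t • v)) v : ℝ) - inner ℝ (gradient f x) v
          ≤ L * ‖v‖ ^ 2 * t := by
        have h1 : (inner ℝ (gradient f (x + t • v)) v : ℝ) - inner ℝ (gradient f x) v
            = inner ℝ (gradient f (x + t • v) - gradient f x) v := by
          rw [inner_sub_left]
        rw [h1]
        calc (inner ℝ (gradient f (x + t • v) - gradient f x) v : ℝ)
            ≤ ‖gradient f (x + t • v) - gradient f x‖ * ‖v‖ := real_inner_le_norm _ _
          _ ≤ L * ‖x + t • v - x‖ * ‖v‖ := by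
              gcongr; exact hLip _ _
          _ = L * ‖v‖ ^ 2 * t := by
              simp [norm_smul, abs_of_pos ht.1]; ring
      linarith
  simp only [hg, one_smul, zero_smul, add_zero] at hmono
  nlinarith [hmono]

theorem grad_avg_gradient_tendsto_zero {n : ℕ}
    (J : EuclideanSpace ℝ (Fin n) → ℝ) (hJ : ContDiff ℝ 1 J) (L : ℝ) (hL : 0 < L)
    (hLip : ∀ x y, ‖gradient J x - gradient J y‖ ≤ L * ‖x - y‖)
    (α : ℝ) (hα : 0 < α) (hα' : α ≤ 1 / (3 * L))
    (hbdd : BddBelow (Set.range J))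
    (θ : ℕ → EuclideanSpace ℝ (Fin n))
    (hrec : ∀ k, θ (k + 1) =
      θ k - (α / 2) • (gradient J (θ k) + gradient J (θ k - α • gradient J (θ k)))) :
    Filter.Tendsto (fun k => gradient J (θ k)) Filter.atTop (nhds 0) := by
  have h3L : (0:ℝ) < 3 * L := by linarith
  have ha : L * α ≤ 1 / 3 := by
    have h1 := (le_div_iff₀ h3L).mp hα'
    nlinarith
  have haN : (0:ℝ) < L * α := mul_pos hL hα
  -- per-step decrease
  have hdec : ∀ k, J (θ k) - J (θ (k + 1)) ≥ α / 2 * ‖gradient J (θ k)‖ ^ 2 := by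
    intro k
    set g := gradient J (θ k) with hgdef
    set g' := gradient J (θ k - α • g) with hg'def
    set v := -((α / 2) • (g + g')) with hvdef
    have hθ : θ (k + 1) = θ k + v := by
      rw [hrec k, hvdef, sub_eq_add_neg]
    have hd := grad_avg_descent J hJ L hLip (θ k) v
    rw [← hθ] at hd
    have hip : (inner ℝ g v : ℝ) = -(α / 2) * (‖g‖ ^ 2 + inner ℝ g g') := by
      rw [hvdef, inner_neg_right, real_inner_smul_right, inner_add_right,
        real_inner_self_eq_norm_sq]
      ring
    have hdiff : ‖g' - g‖ ≤ L * α * ‖g‖ := by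
      calc ‖g' - g‖ ≤ L * ‖(θ k - α • g) - θ k‖ := hLip _ _
        _ = L * α * ‖g‖ := by
            simp [norm_smul, abs_of_pos hα]; ring
    have hgg' : (inner ℝ g g' : ℝ) ≥ ‖g‖ ^ 2 - L * α * ‖g‖ ^ 2 := by
      have h1 : (inner ℝ g g' : ℝ) = ‖g‖ ^ 2 + inner ℝ g (g' - g) := by
        rw [inner_sub_right, real_inner_self_eq_norm_sq]; ring
      have h2 : (inner ℝ g (g' - g) : ℝ) ≥ -(‖g‖ * ‖g' - g‖) := by
        have h2a := real_inner_le_norm g (g - g')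
        have h3 : (inner ℝ g (g - g') : ℝ) = -(inner ℝ g (g' - g) : ℝ) := by
          rw [← inner_neg_right]; congr 1; abel
        have h4 : ‖g - g'‖ = ‖g' - g‖ := norm_sub_rev _ _
        rw [h3, h4] at h2a
        linarith
      have h5 : ‖g‖ * ‖g' - g‖ ≤ ‖g‖ * (L * α * ‖g‖) :=
        mul_le_mul_of_nonneg_left hdiff (norm_nonneg g)
      nlinarith [h1, h2, h5]
    have hvnorm : ‖v‖ ≤ α / 2 * ((2 + L * α) * ‖g‖) := by
      rw [hvdef, norm_neg, norm_smul, Real.norm_eq_abs, abs_of_pos (by positivity : (0:ℝ) < α/2)]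
      gcongr
      calc ‖g + g'‖ ≤ ‖g‖ + ‖g'‖ := norm_add_le _ _
        _ ≤ ‖g‖ + (‖g‖ + ‖g' - g‖) := by
            gcongr
            calc ‖g'‖ = ‖g + (g' - g)‖ := by congr 1; abel
              _ ≤ ‖g‖ + ‖g' - g‖ := norm_add_le _ _
        _ ≤ ‖g‖ + (‖g‖ + L * α * ‖g‖) := by gcongr
        _ = (2 + L * α) * ‖g‖ := by ring
    have hvsq : ‖v‖ ^ 2 ≤ (α / 2 * ((2 + L * α) * ‖g‖)) ^ 2 :=
      pow_le_pow_left₀ (norm_nonneg _) hvnorm 2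
    have e1 : (inner ℝ g v : ℝ) ≤ -(α / 2 * ((2 - L * α) * ‖g‖ ^ 2)) := by
      rw [hip]
      have h1 : (2 - L * α) * ‖g‖ ^ 2 ≤ ‖g‖ ^ 2 + inner ℝ g g' := by nlinarith [hgg']
      have h2 := mul_le_mul_of_nonneg_left h1 (show (0:ℝ) ≤ α / 2 by positivity)
      linarith
    have e2 : L / 2 * ‖v‖ ^ 2 ≤ α / 8 * ((L * α) * ((2 + L * α) ^ 2 * ‖g‖ ^ 2)) := by
      have h2 := mul_le_mul_of_nonneg_left hvsq (show (0:ℝ) ≤ L / 2 by positivity)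
      calc L / 2 * ‖v‖ ^ 2 ≤ L / 2 * (α / 2 * ((2 + L * α) * ‖g‖)) ^ 2 := h2
        _ = α / 8 * ((L * α) * ((2 + L * α) ^ 2 * ‖g‖ ^ 2)) := by ring
    have key : (L * α) * (2 + L * α) ^ 2 ≤ 4 * (2 - L * α) - 4 := by
      nlinarith [ha, haN.le, sq_nonneg (L * α)]
    have key2 : α / 8 * ((L * α) * ((2 + L * α) ^ 2 * ‖g‖ ^ 2))
        ≤ α / 8 * ((4 * (2 - L * α) - 4) * ‖g‖ ^ 2) := by
      have h3 := mul_le_mul_of_nonneg_right key (sq_nonneg ‖g‖)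
      have h4 := mul_le_mul_of_nonneg_left h3 (show (0:ℝ) ≤ α / 8 by positivity)
      linarith [h4]
    linarith [hd, e1, e2, key2]
  -- J (θ k) is antitone and bounded below, hence converges
  have hanti : Antitone (fun k => J (θ k)) := by
    apply antitone_nat_of_succ_le
    intro k
    have h1 := hdec k
    nlinarith [sq_nonneg ‖gradient J (θ k)‖, hα.le]
  have hbdd' : BddBelow (Set.range (fun k => J (θ k))) := by
    obtain ⟨c, hc⟩ := hbdd
    exact ⟨c, fun y ⟨k, hk⟩ => hk ▸ hc ⟨θ k, rfl⟩⟩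
  obtain ⟨c, hc⟩ : ∃ c, Filter.Tendsto (fun k => J (θ k)) Filter.atTop (nhds c) :=
    ⟨_, tendsto_atTop_ciInf hanti hbdd'⟩
  have hc' : Filter.Tendsto (fun k => J (θ (k + 1))) Filter.atTop (nhds c) :=
    hc.comp (Filter.tendsto_add_atTop_nat 1)
  have hdiff0 : Filter.Tendsto (fun k => J (θ k) - J (θ (k + 1))) Filter.atTop (nhds 0) := by
    simpa using hc.sub hc'
  have hbound : ∀ k, ‖gradient J (θ k)‖ ^ 2 ≤ 2 / α * (J (θ k) - J (θ (k + 1))) := by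
    intro k
    have h1 := hdec k
    have h2 := mul_le_mul_of_nonneg_left (ge_iff_le.mp h1)
      (show (0:ℝ) ≤ 2 / α by positivity)
    have h3 : 2 / α * (α / 2 * ‖gradient J (θ k)‖ ^ 2) = ‖gradient J (θ k)‖ ^ 2 := by
      field_simp
    linarith
  have hsq : Filter.Tendsto (fun k => ‖gradient J (θ k)‖ ^ 2) Filter.atTop (nhds 0) :=
    squeeze_zero (fun k => sq_nonneg _) hbound (by simpa using hdiff0.const_mul (2 / α))
  have hnorm : Filter.Tendsto (fun k => ‖gradient J (θ k)‖) Filter.atTop (nhds 0) := by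
    have h1 : Filter.Tendsto (fun k => Real.sqrt (‖gradient J (θ k)‖ ^ 2))
        Filter.atTop (nhds (Real.sqrt 0)) :=
      (Real.continuous_sqrt.tendsto 0).comp hsq
    simpa [Real.sqrt_sq (norm_nonneg _)] using h1
  exact tendsto_zero_iff_norm_tendsto_zero.mpr hnorm
end
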